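/- Pointwise bound for the long-range odd part: Let $C_\infty \in \mathbb{R}$ and let $f : \mathbb{R}^2 \to \mathbb{R}$ be differentiable with $\nabla f$ and $f - C_\infty$ bounded. Then for every $x \in \mathbb{R}^2$ the principal value $J_8(x) = \nabla f(x) \cdot \lim_{R \to \infty} \int_{\{1 < |y| < R\}} \frac{y}{[|y|^2 + (f(x) - f(x-y))^2]^{3/2}}\, dy$ exists and there is a universal constant $C$ with $|J_8(x)| \le C\, \sup_x|\nabla f(x)| \, \|f - C_\infty\|_{L^\infty}$. -/

import Mathlib

set_option maxHeartbeats 1000000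


open MeasureTheory Filter Topology Real Set
open scoped RealInnerProductSpace

noncomputable section

abbrev E2 := EuclideanSpace ℝ (Fin 2)

lemma aux_key (p q t : ℝ) (hp : 1 ≤ p) (hpq : p ≤ q) (ht : 0 ≤ t) (hq : q^2 = p^2 + t^2) :
    (p^3)⁻¹ - (q^3)⁻¹ ≤ 2*t/p^4 := by
  have hp0 : (0:ℝ) < p := lt_of_lt_of_le one_pos hp
  have hq0 : (0:ℝ) < q := lt_of_lt_of_le hp0 hpq
  have hp3 : (0:ℝ) < p^3 := by positivity
  have hq3 : (0:ℝ) < q^3 := by positivity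
  have hp4 : (0:ℝ) < p^4 := by positivity
  rcases le_or_gt p (2*t) with h | h
  · have h1 : (p^3)⁻¹ - (q^3)⁻¹ ≤ (p^3)⁻¹ := by
      have : 0 ≤ (q^3)⁻¹ := by positivity
      linarith
    refine h1.trans ?_
    rw [inv_eq_one_div, div_le_div_iff₀ hp3 hp4]
    nlinarith
  · have h1 : q^3 - p^3 ≤ 3*t^2*q := by
      nlinarith [sq_nonneg (q - p), mul_nonneg (sub_nonneg.mpr hpq) (sq_nonneg q)]
    have h2 : (p^3)⁻¹ - (q^3)⁻¹ = (q^3 - p^3)/(p^3 * q^3) := by field_simp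
    rw [h2, div_le_div_iff₀ (by positivity) hp4]
    have hq2 : p^2 ≤ q^2 := by nlinarith
    have h3 : 3*t^2*p ≤ 2*t*q^2 := by
      nlinarith [mul_nonneg (mul_nonneg ht hp0.le) (by linarith : (0:ℝ) ≤ 2*p - 3*t)]
    have h4 := mul_le_mul_of_nonneg_right h3 (by positivity : (0:ℝ) ≤ q*p^3)
    have h5 := mul_le_mul_of_nonneg_right h1 hp4.le
    nlinarith [h4, h5]

lemma aux_rpow (a : ℝ) (ha : 0 ≤ a) : a ^ (-(3/2) : ℝ) = (Real.sqrt a ^ 3)⁻¹ := by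
  rw [Real.sqrt_eq_rpow, ← Real.rpow_natCast (a ^ ((1:ℝ)/2)) 3, ← Real.rpow_mul ha,
    ← Real.rpow_neg ha]
  norm_num


/-- **Pointwise bound for the long-range odd part.**  There is a universal constant `C` such
that for every differentiable `f : ℝ² → ℝ` with `∇f` and `f - C∞` bounded and every `x`, the
principal value
`J₈(x) = ∇f(x) ⬝ lim_{R→∞} ∫_{1<|y|<R} y / [|y|²+(f(x)-f(x-y))²]^{3/2} dy`
exists and `|J₈(x)| ≤ C sup|∇f| ‖f-C∞‖_∞`. -/
theorem long_range_odd_part_bound :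
    ∃ C : ℝ, 0 < C ∧ ∀ (Cinf : ℝ) (f : E2 → ℝ),
      Differentiable ℝ f →
      BddAbove (Set.range fun x => ‖gradient f x‖) →
      BddAbove (Set.range fun x => |f x - Cinf|) →
      ∀ x : E2, ∃ v : E2,
        Tendsto (fun R : ℝ => ∫ y in {y : E2 | 1 < ‖y‖ ∧ ‖y‖ < R},
            ((‖y‖ ^ 2 + (f x - f (x - y)) ^ 2) ^ (-(3 / 2) : ℝ)) • y)
          atTop (𝓝 v) ∧
        |⟪gradient f x, v⟫| ≤
          C * (⨆ x : E2, ‖gradient f x‖) * (⨆ x : E2, |f x - Cinf|) := by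
  classical
  have hmeas3 : Measurable fun y : E2 => (‖y‖^3)⁻¹ := (measurable_norm.pow_const 3).inv
  have hset : MeasurableSet {y : E2 | 1 < ‖y‖} :=
    (isOpen_lt continuous_const continuous_norm).measurableSet
  -- integrability of ‖y‖⁻³ on {1 < ‖y‖}
  have hInt : IntegrableOn (fun y : E2 => (‖y‖^3)⁻¹) {y : E2 | 1 < ‖y‖} := by
    have hdim : ((Module.finrank ℝ E2 : ℝ)) < 3 := by
      simp [finrank_euclideanSpace]; norm_num
    have hbig : Integrable (fun y : E2 => 8 * (1 + ‖y‖) ^ (-(3:ℝ))) :=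
      (integrable_one_add_norm hdim).const_mul 8
    refine (hbig.restrict (s := {y : E2 | 1 < ‖y‖})).mono' hmeas3.aestronglyMeasurable ?_
    filter_upwards [ae_restrict_mem hset] with y hy
    have hy1 : 1 < ‖y‖ := hy
    have h0 : (0:ℝ) < 1 + ‖y‖ := by linarith
    rw [Real.norm_eq_abs, abs_of_nonneg (by positivity)]
    have hrw : (1 + ‖y‖) ^ (-(3:ℝ)) = ((1 + ‖y‖)^3)⁻¹ := by
      rw [Real.rpow_neg h0.le, show ((3:ℝ)) = ((3:ℕ):ℝ) by norm_num, Real.rpow_natCast]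
    rw [hrw]
    have key : (1:ℝ)/(‖y‖^3) ≤ 8/((1+‖y‖)^3) := by
      rw [div_le_div_iff₀ (by positivity) (by positivity)]
      have c1 : ‖y‖^2 ≤ ‖y‖^3 := by nlinarith
      have c2 : ‖y‖ ≤ ‖y‖^3 := by nlinarith
      have c3 : (1:ℝ) ≤ ‖y‖^3 := by nlinarith
      nlinarith
    simpa [one_div, div_eq_mul_inv] using key
  set I : ℝ := ∫ y in {y : E2 | 1 < ‖y‖}, (‖y‖^3)⁻¹ with hIdef
  have hI0 : 0 ≤ I := setIntegral_nonneg hset fun y _ => by positivity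
  refine ⟨4*I+1, by linarith, ?_⟩
  intro Cinf f hf hbg hbf x
  set L := ⨆ x : E2, ‖gradient f x‖ with hLdef
  set M := ⨆ x : E2, |f x - Cinf| with hMdef
  have hLx : ∀ z, ‖gradient f z‖ ≤ L := fun z => le_ciSup hbg z
  have hMx : ∀ z, |f z - Cinf| ≤ M := fun z => le_ciSup hbf z
  have hL0 : 0 ≤ L := (norm_nonneg _).trans (hLx x)
  have hM0 : 0 ≤ M := (abs_nonneg _).trans (hMx x)
  set diff : E2 → E2 := fun y =>
    ((‖y‖ ^ 2 + (f x - f (x - y)) ^ 2) ^ (-(3 / 2) : ℝ)) • y - (‖y‖^3)⁻¹ • y with hdiffdef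
  have hfc : Continuous f := hf.continuous
  have hg_meas : Measurable fun y : E2 => f x - f (x - y) :=
    measurable_const.sub (hfc.measurable.comp (measurable_const.sub measurable_id))
  have hk_meas : Measurable fun y : E2 => ((‖y‖ ^ 2 + (f x - f (x - y)) ^ 2) ^ (-(3 / 2) : ℝ)) := by
    fun_prop
  have hdiff_meas : Measurable diff :=
    (hk_meas.smul measurable_id).sub (hmeas3.smul measurable_id)
  -- pointwise bound
  have hpt : ∀ y ∈ {y : E2 | 1 < ‖y‖}, ‖diff y‖ ≤ 4*M*(‖y‖^3)⁻¹ := by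
    intro y hy
    have hy1 : 1 < ‖y‖ := hy
    have hp0 : (0:ℝ) < ‖y‖ := lt_trans one_pos hy1
    have hgM : |f x - f (x - y)| ≤ 2*M := by
      have h1 := abs_le.mp (hMx x)
      have h2 := abs_le.mp (hMx (x - y))
      rw [abs_le]
      constructor <;> [linarith; linarith]
    have ha : (0:ℝ) ≤ ‖y‖ ^ 2 + (f x - f (x - y)) ^ 2 := by positivity
    have hq2 : Real.sqrt (‖y‖ ^ 2 + (f x - f (x - y)) ^ 2) ^ 2
        = ‖y‖^2 + |f x - f (x - y)|^2 := by
      rw [Real.sq_sqrt ha, sq_abs]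
    have hpq : ‖y‖ ≤ Real.sqrt (‖y‖ ^ 2 + (f x - f (x - y)) ^ 2) := by
      have hle : ‖y‖^2 ≤ ‖y‖ ^ 2 + (f x - f (x - y)) ^ 2 :=
        le_add_of_nonneg_right (sq_nonneg _)
      have h := Real.sqrt_le_sqrt hle
      rwa [Real.sqrt_sq (norm_nonneg y)] at h
    have hW := aux_key ‖y‖ (Real.sqrt (‖y‖ ^ 2 + (f x - f (x - y)) ^ 2))
      |f x - f (x - y)| hy1.le hpq (abs_nonneg _) hq2
    have hA : (‖y‖ ^ 2 + (f x - f (x - y)) ^ 2) ^ (-(3 / 2) : ℝ)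
        = (Real.sqrt (‖y‖ ^ 2 + (f x - f (x - y)) ^ 2) ^ 3)⁻¹ := aux_rpow _ ha
    have hd : diff y = ((Real.sqrt (‖y‖ ^ 2 + (f x - f (x - y)) ^ 2) ^ 3)⁻¹ - (‖y‖^3)⁻¹) • y := by
      rw [hdiffdef]
      simp only
      rw [← sub_smul, hA]
    have hABle : (Real.sqrt (‖y‖ ^ 2 + (f x - f (x - y)) ^ 2) ^ 3)⁻¹ ≤ (‖y‖^3)⁻¹ := by
      apply inv_anti₀ (by positivity)
      exact pow_le_pow_left₀ (norm_nonneg y) hpq 3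
    rw [hd, norm_smul, Real.norm_eq_abs, abs_of_nonpos (by linarith), neg_sub]
    calc ((‖y‖^3)⁻¹ - (Real.sqrt (‖y‖ ^ 2 + (f x - f (x - y)) ^ 2) ^ 3)⁻¹) * ‖y‖
        ≤ (2*|f x - f (x - y)|/‖y‖^4) * ‖y‖ := mul_le_mul_of_nonneg_right hW hp0.le
      _ = 2*|f x - f (x - y)|/‖y‖^3 := by field_simp
      _ ≤ 4*M/‖y‖^3 := by
          rw [div_le_div_iff₀ (by positivity) (by positivity)]
          nlinarith [mul_le_mul_of_nonneg_right hgM (pow_pos hp0 3).le]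
      _ = 4*M*(‖y‖^3)⁻¹ := by rw [div_eq_mul_inv]
  have hbnd_int : IntegrableOn (fun y : E2 => 4*M*(‖y‖^3)⁻¹) {y : E2 | 1 < ‖y‖} :=
    hInt.const_mul (4*M)
  have hdiff_int : IntegrableOn diff {y : E2 | 1 < ‖y‖} := by
    refine hbnd_int.mono' hdiff_meas.aestronglyMeasurable ?_
    filter_upwards [ae_restrict_mem hset] with y hy using hpt y hy
  set v : E2 := ∫ y in {y : E2 | 1 < ‖y‖}, diff y with hvdef
  refine ⟨v, ?_, ?_⟩
  · -- the principal value converges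
    set s : ℝ → Set E2 := fun R => {y : E2 | 1 < ‖y‖ ∧ ‖y‖ < R} with hsdef
    have hsm : ∀ R, MeasurableSet (s R) := fun R =>
      ((isOpen_lt continuous_const continuous_norm).inter
        (isOpen_lt continuous_norm continuous_const)).measurableSet
    have hmono : Monotone s := fun R R' hRR' y hy => ⟨hy.1, lt_of_lt_of_le hy.2 hRR'⟩
    have hU : (⋃ R : ℝ, s R) = {y : E2 | 1 < ‖y‖} := by
      ext y
      simp only [hsdef, mem_iUnion, mem_setOf_eq]
      constructor
      · rintro ⟨R, h1, _⟩; exact h1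
      · intro h1; exact ⟨‖y‖+1, h1, lt_add_one _⟩
    have hdi2 : IntegrableOn diff (⋃ R : ℝ, s R) := by rw [hU]; exact hdiff_int
    have hT : Tendsto (fun R : ℝ => ∫ y in s R, diff y) atTop (𝓝 v) := by
      have h := tendsto_setIntegral_of_monotone hsm hmono hdi2
      rwa [hU] at h
    refine Tendsto.congr (fun R => ?_) hT
    have hsub : s R ⊆ {y : E2 | 1 < ‖y‖} := fun y hy => hy.1
    -- integrability of the odd part on the annulus
    have hwint : IntegrableOn (fun y : E2 => (‖y‖^3)⁻¹ • y) (s R) := by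
      have hfin : volume (s R) < ⊤ := by
        refine lt_of_le_of_lt (measure_mono (fun y hy => ?_)) (measure_ball_lt_top (x := (0:E2)) (r := R))
        exact mem_ball_zero_iff.mpr hy.2
      refine Integrable.mono' (g := fun _ => (1:ℝ))
        ((integrableOn_const_iff (C := (1:ℝ))).mpr (Or.inr hfin)) ((hmeas3.smul measurable_id).aestronglyMeasurable) ?_
      filter_upwards [ae_restrict_mem (hsm R)] with y hy
      have hy1 : 1 < ‖y‖ := hy.1
      rw [norm_smul, Real.norm_eq_abs, abs_of_nonneg (by positivity)]
      rw [inv_eq_one_div, one_div_mul_eq_div, div_le_one (by positivity)]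
      have h0 : (0:ℝ) < ‖y‖ := lt_trans one_pos hy1
      nlinarith [mul_nonneg (mul_nonneg (sub_nonneg.mpr hy1.le) h0.le)
        (by linarith : (0:ℝ) ≤ ‖y‖ + 1)]
    have hodd : ∫ y in s R, (‖y‖^3)⁻¹ • y = 0 := by
      set W : E2 → E2 := (s R).indicator (fun y => (‖y‖^3)⁻¹ • y) with hWdef
      have hsymm : ∀ y : E2, W (-y) = - W y := by
        intro y
        by_cases hy : y ∈ s R
        · have hy' : -y ∈ s R := by
            simp only [hsdef, mem_setOf_eq, norm_neg] at hy ⊢; exact hy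
          rw [hWdef, indicator_of_mem hy', indicator_of_mem hy, norm_neg, smul_neg]
        · have hy' : -y ∉ s R := by
            simp only [hsdef, mem_setOf_eq, norm_neg] at hy ⊢; exact hy
          rw [hWdef, indicator_of_notMem hy', indicator_of_notMem hy, neg_zero]
      have hIW : ∫ y in s R, (‖y‖^3)⁻¹ • y = ∫ y, W y := (integral_indicator (hsm R)).symm
      have h1 : ∫ y, W y = - ∫ y, W y := by
        conv_lhs => rw [← integral_neg_eq_self W volume]
        simp_rw [hsymm]
        exact integral_neg W
      rw [hIW]
      have h2 : (∫ y, W y) + (∫ y, W y) = 0 := by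
        nth_rewrite 1 [h1]; exact neg_add_cancel _
      have h3 : (2:ℝ) • (∫ y, W y) = 0 := by rw [two_smul]; exact h2
      rcases smul_eq_zero.mp h3 with h | h
      · norm_num at h
      · exact h
    have hsplit : ∫ y in s R, ((‖y‖ ^ 2 + (f x - f (x - y)) ^ 2) ^ (-(3 / 2) : ℝ)) • y
        = ∫ y in s R, (diff y + (‖y‖^3)⁻¹ • y) := by
      refine integral_congr_ae (ae_of_all _ fun y => ?_)
      rw [hdiffdef]; simp
    rw [hsplit, integral_add (hdiff_int.mono_set hsub) hwint, hodd, add_zero]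
  · -- the bound
    have hv : ‖v‖ ≤ 4*M*I := by
      calc ‖v‖ ≤ ∫ y in {y : E2 | 1 < ‖y‖}, ‖diff y‖ := norm_integral_le_integral_norm _
        _ ≤ ∫ y in {y : E2 | 1 < ‖y‖}, 4*M*(‖y‖^3)⁻¹ :=
            setIntegral_mono_on hdiff_int.norm hbnd_int hset hpt
        _ = 4*M*I := by rw [hIdef, ← integral_const_mul]
    calc |⟪gradient f x, v⟫| ≤ ‖gradient f x‖ * ‖v‖ := abs_real_inner_le_norm _ _
      _ ≤ L * (4*M*I) := mul_le_mul (hLx x) hv (norm_nonneg v) hL0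
      _ = 4*I*(L*M) := by ring
      _ ≤ (4*I+1)*(L*M) := mul_le_mul_of_nonneg_right (by linarith) (mul_nonneg hL0 hM0)
      _ = (4*I+1) * L * M := by ring
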